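/- Let α be irrational. For any interval I ⊂ 𝕋 and any x ∈ 𝕋, |#{0 ≤ s < q_n : x + sα mod 1 ∈ I} − q_n λ(I)| ≤ 4, where λ is Lebesgue measure on 𝕋 and q_n is a continued fraction denominator of α. -/

import Mathlib

attribute [local instance] Classical.propDecidable

private theorem dk_transfer (q : ℕ) (J : ℕ → ℕ) (hJlt : ∀ s < q, J s < q)
    (hinj : ∀ s < q, ∀ t < q, J s = J t → s = t) (T : ℕ → Prop) [DecidablePred T] :
    ((Finset.range q).filter (fun s => T (J s))).card = ((Finset.range q).filter T).card := by
  classical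
  have hinj' : Set.InjOn J (Finset.range q) := by
    intro s hs t ht h
    exact hinj s (Finset.mem_range.mp hs) t (Finset.mem_range.mp ht) h
  have himg : (Finset.range q).image J = Finset.range q := by
    apply Finset.eq_of_subset_of_card_le
    · intro k hk
      obtain ⟨s, hs, rfl⟩ := Finset.mem_image.mp hk
      exact Finset.mem_range.mpr (hJlt s (Finset.mem_range.mp hs))
    · rw [Finset.card_image_of_injOn hinj', Finset.card_range]
  calc ((Finset.range q).filter (fun s => T (J s))).card
      = (((Finset.range q).filter (fun s => T (J s))).image J).card := by
        rw [Finset.card_image_of_injOn (hinj'.mono (Finset.coe_subset.mpr (Finset.filter_subset _ _)))]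
    _ = (((Finset.range q).image J).filter T).card := by
        rw [Finset.filter_image]
    _ = ((Finset.range q).filter T).card := by rw [himg]

private theorem dk_upper (q : ℕ) (hq : 1 ≤ q) (j : ℕ) (hj : j < q) (δ ε L : ℝ)
    (hδ0 : 0 ≤ δ) (hδ1 : δ < 1) (hε : |ε| < 1/q)
    (h : Int.fract (((j:ℝ) + δ)/q + ε) < L) :
    (j:ℝ) < q*L + 1 ∨ j = 0 ∨ j = q - 1 := by
  have hq0 : (0:ℝ) < q := by exact_mod_cast hq
  have hε1 : ε < 1/q := (abs_lt.mp hε).2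
  have hε2 : -(1/q) < ε := (abs_lt.mp hε).1
  set A : ℝ := ((j:ℝ) + δ)/q with hA
  have hA0 : 0 ≤ A := by positivity
  by_cases h0 : A + ε < 0
  · right; left
    have h1 : A < 1/q := by linarith
    rw [hA, div_lt_div_iff₀ hq0 hq0, one_mul] at h1
    have hj1 : (j:ℝ) < 1 := by nlinarith
    have : j < 1 := by exact_mod_cast hj1
    omega
  · by_cases h1 : A + ε < 1
    · left
      rw [Int.fract_eq_self.mpr ⟨not_lt.mp h0, h1⟩] at h
      have h2 : A < L + 1/q := by linarith
      rw [hA, div_lt_iff₀ hq0] at h2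
      have h3 : (L + 1/(q:ℝ)) * q = L*q + 1 := by field_simp
      linarith
    · right; right
      have hA' : ((q:ℝ)-1)/q < A := by
        have : 1 - 1/(q:ℝ) = ((q:ℝ)-1)/q := by field_simp
        linarith
      rw [hA, div_lt_div_iff₀ hq0 hq0] at hA'
      have h4 : (q:ℝ) - 1 < (j:ℝ) + δ := by nlinarith
      have h5 : (q:ℝ) < (j:ℝ) + 2 := by linarith
      have : q < j + 2 := by exact_mod_cast h5
      omega

private theorem dk_lower (q : ℕ) (hq : 1 ≤ q) (j : ℕ) (δ ε L : ℝ) (hδ0 : 0 ≤ δ)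
    (hε : |ε| < 1/q) (hL1 : L ≤ 1) (h1 : 1 ≤ j) (h3 : (j:ℝ) ≤ q*L - 1 - δ) :
    Int.fract (((j:ℝ) + δ)/q + ε) < L := by
  have hq0 : (0:ℝ) < q := by exact_mod_cast hq
  have hε1 : ε < 1/q := (abs_lt.mp hε).2
  have hε2 : -(1/q) < ε := (abs_lt.mp hε).1
  have hj1 : (1:ℝ) ≤ (j:ℝ) := by exact_mod_cast h1
  set A : ℝ := ((j:ℝ) + δ)/q with hA
  have hge : 0 ≤ A + ε := by
    have hp : (0:ℝ) ≤ ((j:ℝ) - 1 + δ)/q := div_nonneg (by linarith) (le_of_lt hq0)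
    have hd : A - 1/q = ((j:ℝ) - 1 + δ)/q := by rw [hA]; field_simp; ring
    linarith
  have hlt : A + ε < L := by
    have hd : A + 1/q = ((j:ℝ) + 1 + δ)/q := by rw [hA]; field_simp; ring
    have h5 : ((j:ℝ) + 1 + δ)/q ≤ L := by
      rw [div_le_iff₀ hq0]; linarith
    linarith
  rw [Int.fract_eq_self.mpr ⟨hge, by linarith⟩]
  exact hlt

private theorem dk_fract (α x a : ℝ) (q : ℕ) (hq : 1 ≤ q) (p : ℤ) (s : ℕ) :
    Int.fract (x + (s:ℝ) * α - a) =
      Int.fract (((((⌊(q:ℝ)*(x-a)⌋ + (s:ℤ)*p) % (q:ℤ)).toNat : ℝ)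
        + Int.fract ((q:ℝ)*(x-a)))/q + (s:ℝ)*(α - p/q)) := by
  have hq0 : (0:ℝ) < q := by exact_mod_cast hq
  have hqz : (q:ℤ) ≠ 0 := by exact_mod_cast (by omega : q ≠ 0)
  set m : ℤ := ⌊(q:ℝ)*(x-a)⌋ with hm
  set δ : ℝ := Int.fract ((q:ℝ)*(x-a)) with hδ
  set R : ℤ := (m + (s:ℤ)*p) % (q:ℤ) with hR
  set D : ℤ := (m + (s:ℤ)*p) / (q:ℤ) with hD
  have hRnn : 0 ≤ R := Int.emod_nonneg _ hqz
  have hRt : ((R.toNat : ℝ)) = (R : ℝ) := by exact_mod_cast Int.toNat_of_nonneg hRnn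
  have hdm : (q:ℤ) * D + R = m + (s:ℤ)*p := Int.mul_ediv_add_emod _ _
  have hdmr : (q:ℝ) * (D:ℝ) + (R:ℝ) = (m:ℝ) + (s:ℝ)*(p:ℝ) := by exact_mod_cast hdm
  have hmδ : (m:ℝ) + δ = (q:ℝ)*(x-a) := Int.floor_add_fract _
  have key : x + (s:ℝ)*α - a = (D:ℝ) + (((R.toNat : ℝ) + δ)/q + (s:ℝ)*(α - p/q)) := by
    rw [hRt]
    field_simp
    nlinarith [hdmr, hmδ]
  rw [key, Int.fract_intCast_add]

private theorem dk_inj (q : ℕ) (hq : 1 ≤ q) (p m : ℤ) (hcop : Nat.Coprime p.natAbs q)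
    (s t : ℕ) (hs : s < q) (ht : t < q)
    (h : ((m + (s:ℤ)*p) % (q:ℤ)).toNat = ((m + (t:ℤ)*p) % (q:ℤ)).toNat) : s = t := by
  have hqz : (q:ℤ) ≠ 0 := by exact_mod_cast (by omega : q ≠ 0)
  have h1 : (m + (s:ℤ)*p) % (q:ℤ) = (m + (t:ℤ)*p) % (q:ℤ) := by
    have a1 := Int.toNat_of_nonneg (Int.emod_nonneg (m + (s:ℤ)*p) hqz)
    have a2 := Int.toNat_of_nonneg (Int.emod_nonneg (m + (t:ℤ)*p) hqz)
    omega
  have hmod : (s:ℤ)*p ≡ (t:ℤ)*p [ZMOD (q:ℤ)] := by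
    have : (m + (s:ℤ)*p) ≡ (m + (t:ℤ)*p) [ZMOD (q:ℤ)] := h1
    exact (Int.ModEq.add_left_cancel' m this)
  have hg : Int.gcd ((q:ℤ)) p = 1 := by simpa [Int.gcd] using hcop.symm
  have hst : (s:ℤ) ≡ (t:ℤ) [ZMOD (q:ℤ)] := by
    have := hmod.cancel_right_div_gcd (by exact_mod_cast hq : (0:ℤ) < (q:ℤ))
    simpa [hg] using this
  have : (s:ℤ) % q = (t:ℤ) % q := hst
  rw [Int.emod_eq_of_lt (by positivity) (by exact_mod_cast hs),
      Int.emod_eq_of_lt (by positivity) (by exact_mod_cast ht)] at this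
  exact_mod_cast this

/-- Denjoy–Koksma discrepancy estimate: for any arc `I = [a, b)` of length `b - a ≤ 1`
on the torus and any `x`, the number of `s < q_n` with `x + sα mod 1 ∈ I` differs from
`q_n λ(I)` by at most `4`. -/
theorem orbit_discrepancy_interval (α : ℝ) (hα : Irrational α) (x a b : ℝ)
    (q : ℕ) (hq : 1 ≤ q) (p : ℤ) (hcop : Nat.Coprime p.natAbs q)
    (happrox : |(q : ℝ) * α - (p : ℝ)| < 1 / (q : ℝ))
    (hab : a ≤ b) (hlen : b - a ≤ 1) :
    |(((Finset.range q).filter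
          (fun s => Int.fract (x + (s : ℝ) * α - a) < b - a)).card : ℝ) -
        (q : ℝ) * (b - a)| ≤ 4 := by
  have hrw : (Finset.range q >>= fun a1 => (pure ((a1:ℝ)) : Finset ℝ))
      = (Finset.range q).image (fun n : ℕ => (n:ℝ)) := Finset.sup_singleton_apply _ _
  rw [hrw, Finset.filter_image, Finset.card_image_of_injective _ Nat.cast_injective]
  have hq0 : (0:ℝ) < q := by exact_mod_cast hq
  have hqz : (q:ℤ) ≠ 0 := by exact_mod_cast (by omega : q ≠ 0)
  set L : ℝ := b - a with hLdef
  have hL0 : 0 ≤ L := sub_nonneg.mpr hab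
  set m : ℤ := ⌊(q:ℝ)*(x-a)⌋ with hm
  set δ : ℝ := Int.fract ((q:ℝ)*(x-a)) with hδ
  have hδ0 : 0 ≤ δ := Int.fract_nonneg _
  have hδ1 : δ < 1 := Int.fract_lt_one _
  set J : ℕ → ℕ := fun s => ((m + (s:ℤ)*p) % (q:ℤ)).toNat with hJ
  have hJlt : ∀ s, s < q → J s < q := by
    intro s _
    have h1 := Int.emod_nonneg (m + (s:ℤ)*p) hqz
    have h2 := Int.emod_lt_of_pos (m + (s:ℤ)*p) (by omega : (0:ℤ) < (q:ℤ))
    simp only [hJ]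
    omega
  have hinj : ∀ s < q, ∀ t < q, J s = J t → s = t := fun s hs t ht h =>
    dk_inj q hq p m hcop s t hs ht h
  have hεb : ∀ s : ℕ, s < q → |(s:ℝ)*(α - p/q)| < 1/q := by
    intro s hs
    have habs : |(s:ℝ)*(α - (p:ℝ)/q)| = (s:ℝ) * |α - (p:ℝ)/q| := by
      rw [abs_mul, abs_of_nonneg (by positivity : (0:ℝ) ≤ (s:ℝ))]
    have h2 : (s:ℝ) * |α - (p:ℝ)/q| ≤ (q:ℝ) * |α - (p:ℝ)/q| :=
      mul_le_mul_of_nonneg_right (by exact_mod_cast le_of_lt hs) (abs_nonneg _)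
    have h4 : (q:ℝ)*(α - (p:ℝ)/q) = (q:ℝ)*α - (p:ℝ) := by field_simp
    have h3 : (q:ℝ) * |α - (p:ℝ)/q| = |(q:ℝ)*α - (p:ℝ)| := by
      rw [← h4, abs_mul, abs_of_nonneg (le_of_lt hq0)]
    rw [habs]
    calc (s:ℝ) * |α - (p:ℝ)/q| ≤ (q:ℝ) * |α - (p:ℝ)/q| := h2
      _ = |(q:ℝ)*α - (p:ℝ)| := h3
      _ < 1/q := happrox
  have hfract : ∀ s : ℕ, Int.fract (x + (s:ℝ)*α - a) =
      Int.fract (((J s : ℝ) + δ)/q + (s:ℝ)*(α - p/q)) := fun s =>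
    dk_fract α x a q hq p s
  set N := ((Finset.range q).filter
      (fun s : ℕ => Int.fract (x + (s : ℝ) * α - a) < b - a)).card with hN
  -- upper bound
  have hupper : (N:ℝ) ≤ (q:ℝ)*L + 4 := by
    have hsub1 : ((Finset.range q).filter
        (fun s : ℕ => Int.fract (x + (s : ℝ) * α - a) < b - a)) ⊆
        (Finset.range q).filter (fun s : ℕ => ((J s:ℝ) < (q:ℝ)*L+1 ∨ J s = 0 ∨ J s = q-1)) := by
      intro s hs
      rw [Finset.mem_filter] at hs ⊢
      obtain ⟨hsr, hsc⟩ := hs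
      have hsq := Finset.mem_range.mp hsr
      rw [hfract s] at hsc
      exact ⟨hsr, dk_upper q hq (J s) (hJlt s hsq) δ _ L hδ0 hδ1 (hεb s hsq) hsc⟩
    have htrans := dk_transfer q J hJlt hinj
      (fun k : ℕ => ((k:ℝ) < (q:ℝ)*L+1 ∨ k = 0 ∨ k = q-1))
    have hsub2 : (Finset.range q).filter
        (fun k : ℕ => ((k:ℝ) < (q:ℝ)*L+1 ∨ k = 0 ∨ k = q-1)) ⊆
        Finset.range ⌈(q:ℝ)*L+1⌉₊ ∪ {0, q-1} := by
      intro k hk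
      rw [Finset.mem_filter] at hk
      rcases hk.2 with h | h | h
      · exact Finset.mem_union_left _ (Finset.mem_range.mpr (Nat.lt_ceil.mpr h))
      · exact Finset.mem_union_right _ (by simp [h])
      · exact Finset.mem_union_right _ (by simp [h])
    have hcard2 : ((Finset.range q).filter
        (fun k : ℕ => ((k:ℝ) < (q:ℝ)*L+1 ∨ k = 0 ∨ k = q-1))).card ≤ ⌈(q:ℝ)*L+1⌉₊ + 2 := by
      calc _ ≤ (Finset.range ⌈(q:ℝ)*L+1⌉₊ ∪ ({0, q-1} : Finset ℕ)).card :=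
            Finset.card_le_card hsub2
        _ ≤ (Finset.range ⌈(q:ℝ)*L+1⌉₊).card + ({0, q-1} : Finset ℕ).card :=
            Finset.card_union_le _ _
        _ ≤ ⌈(q:ℝ)*L+1⌉₊ + 2 := by
            simp only [Finset.card_range]
            have : ({0, q-1} : Finset ℕ).card ≤ 2 :=
              le_trans (Finset.card_insert_le _ _) (by simp)
            omega
    have hNle : N ≤ ⌈(q:ℝ)*L+1⌉₊ + 2 := by
      rw [hN]
      exact le_trans (Finset.card_le_card hsub1) (le_of_eq htrans |>.trans hcard2)
    have hceil : (⌈(q:ℝ)*L+1⌉₊ : ℝ) < (q:ℝ)*L+1 + 1 :=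
      Nat.ceil_lt_add_one (by positivity)
    have : (N:ℝ) ≤ (⌈(q:ℝ)*L+1⌉₊ : ℝ) + 2 := by exact_mod_cast hNle
    linarith
  -- lower bound
  have hlower : (q:ℝ)*L - 4 ≤ (N:ℝ) := by
    by_cases hcase : (q:ℝ)*L ≤ 4
    · have : (0:ℝ) ≤ (N:ℝ) := by positivity
      linarith
    · push_neg at hcase
      set Mn : ℕ := ⌊(q:ℝ)*L - 1 - δ⌋₊ with hMn
      have hpos : (0:ℝ) ≤ (q:ℝ)*L - 1 - δ := by linarith
      have hsub2 : (Finset.range q).filter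
          (fun s : ℕ => 1 ≤ J s ∧ ((J s:ℝ)) ≤ (q:ℝ)*L - 1 - δ) ⊆
          ((Finset.range q).filter
            (fun s : ℕ => Int.fract (x + (s : ℝ) * α - a) < b - a)) := by
        intro s hs
        rw [Finset.mem_filter] at hs ⊢
        obtain ⟨hsr, hc1, hc2⟩ := hs
        have hsq := Finset.mem_range.mp hsr
        refine ⟨hsr, ?_⟩
        rw [hfract s]
        exact dk_lower q hq (J s) δ _ L hδ0 (hεb s hsq) hlen hc1 hc2
      have htrans := dk_transfer q J hJlt hinj
        (fun k : ℕ => 1 ≤ k ∧ ((k:ℝ)) ≤ (q:ℝ)*L - 1 - δ)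
      have hIcc : Finset.Icc 1 Mn ⊆ (Finset.range q).filter
          (fun k : ℕ => 1 ≤ k ∧ ((k:ℝ)) ≤ (q:ℝ)*L - 1 - δ) := by
        intro k hk
        rw [Finset.mem_Icc] at hk
        have hkr : (k:ℝ) ≤ (q:ℝ)*L - 1 - δ :=
          le_trans (by exact_mod_cast hk.2 : (k:ℝ) ≤ (Mn:ℝ)) (Nat.floor_le hpos)
        have hkq : (k:ℝ) < (q:ℝ) := by nlinarith
        rw [Finset.mem_filter, Finset.mem_range]
        exact ⟨by exact_mod_cast hkq, hk.1, hkr⟩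
      have hMcard : (Finset.Icc 1 Mn).card = Mn := by
        rw [Nat.card_Icc]; omega
      have hNge : Mn ≤ N := by
        rw [hN]
        calc Mn = (Finset.Icc 1 Mn).card := hMcard.symm
          _ ≤ ((Finset.range q).filter
              (fun k : ℕ => 1 ≤ k ∧ ((k:ℝ)) ≤ (q:ℝ)*L - 1 - δ)).card :=
            Finset.card_le_card hIcc
          _ = ((Finset.range q).filter
              (fun s : ℕ => 1 ≤ J s ∧ ((J s:ℝ)) ≤ (q:ℝ)*L - 1 - δ)).card := htrans.symm
          _ ≤ _ := Finset.card_le_card hsub2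
      have hfl : (q:ℝ)*L - 1 - δ < (Mn:ℝ) + 1 := Nat.lt_floor_add_one _
      have : (Mn:ℝ) ≤ (N:ℝ) := by exact_mod_cast hNge
      linarith
  exact abs_le.mpr ⟨by linarith, by linarith⟩
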